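/- Fix d ≥ 1, a nonzero real number a and a nonzero complex number c, and let K : ℝ^d × ℝ^d → ℂ be the free-particle propagator K(x,y) = c · exp(i a ‖x − y‖²) (for a free particle of mass m evolving for time T one has a = m/(2ħT) and c = (m/(2πiħT))^{d/2}). Then K is continuous and nowhere zero, and for every ψ ∈ L²(ℝ^d) that is not almost everywhere zero, the ℂ-linear span of the set { χ_B · ψ_A : A ⊆ ℝ^d compact Lebesgue-measurable, B ⊆ ℝ^d bounded Lebesgue-measurable } is dense in L²(ℝ^d). -/

import Mathlib

open MeasureTheory Metric Filter
open scoped ComplexConjugate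

lemma aux {d : ℕ} {h : EuclideanSpace ℝ (Fin d) → ℂ} (hh : LocallyIntegrable h volume)
    {D : Set (EuclideanSpace ℝ (Fin d))} (hD : Dense D)
    (hz : ∀ z ∈ D, ∀ q : ℚ, 0 < q → ∫ y in Metric.closedBall z (q : ℝ), h y = 0) :
    h =ᵐ[volume] 0 := by
  filter_upwards [IsUnifLocDoublingMeasure.ae_tendsto_average
    (μ := (volume : Measure (EuclideanSpace ℝ (Fin d)))) hh 1] with x hx
  have hsel : ∀ n : ℕ, ∃ p : EuclideanSpace ℝ (Fin d) × ℚ, p.1 ∈ D ∧ dist x p.1 < (p.2 : ℝ) ∧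
      (1 : ℝ) / (n + 1) < (p.2 : ℝ) ∧ (p.2 : ℝ) < 2 / (n + 1) := by
    intro n
    obtain ⟨z, hz1, hz2⟩ := Metric.dense_iff.1 hD x ((1 : ℝ) / (n + 1)) (by positivity)
    obtain ⟨q, hq1, hq2⟩ := exists_rat_btwn
      (show (1 : ℝ) / (n + 1) < 2 / (n + 1) by
        apply div_lt_div_of_pos_right (by norm_num) (by positivity))
    exact ⟨⟨z, q⟩, hz2, lt_trans (by simpa [dist_comm] using mem_ball.1 hz1) hq1, hq1, hq2⟩
  choose p hpD hpd hp1 hp2 using hsel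
  have hq0 : ∀ n, (0 : ℝ) < ((p n).2 : ℝ) := fun n => lt_trans (by positivity) (hp1 n)
  have hδlim : Tendsto (fun n => ((p n).2 : ℝ)) atTop (nhdsWithin 0 (Set.Ioi 0)) := by
    apply tendsto_nhdsWithin_of_tendsto_nhds_of_eventually_within
    · have h2 : Tendsto (fun n : ℕ => (2 : ℝ) / (n + 1)) atTop (nhds 0) := by
        have := tendsto_one_div_add_atTop_nhds_zero_nat (𝕜 := ℝ)
        have h3 := this.const_mul (2 : ℝ)
        simpa [mul_one_div, div_eq_mul_inv] using h3
      exact tendsto_of_tendsto_of_tendsto_of_le_of_le tendsto_const_nhds h2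
        (fun n => (hq0 n).le) (fun n => (hp2 n).le)
    · exact Eventually.of_forall fun n => hq0 n
  have hmem : ∀ᶠ n in atTop, x ∈ closedBall ((p n).1) (1 * ((p n).2 : ℝ)) := by
    refine Eventually.of_forall fun n => ?_
    rw [one_mul, mem_closedBall]
    exact (hpd n).le
  have htend := hx (fun n => (p n).1) (fun n => ((p n).2 : ℝ)) hδlim hmem
  have hzero : ∀ n, (⨍ y in closedBall ((p n).1) (((p n).2 : ℝ)), h y) = 0 := by
    intro n
    rw [setAverage_eq, hz _ (hpD n) _ (by exact_mod_cast hq0 n), smul_zero]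
  simp only [hzero] at htend
  show h x = (0 : ℂ); exact tendsto_nhds_unique htend tendsto_const_nhds

/-- The set of `L²` classes of the functions `χ_B · ψ_A` (`A` compact
measurable, `B` bounded measurable), where `ψ_A x = ∫_A K (x, y) ψ y dy`. -/
def restrictedEvolutionSet (d : ℕ)
    (K : EuclideanSpace ℝ (Fin d) × EuclideanSpace ℝ (Fin d) → ℂ)
    (ψ : EuclideanSpace ℝ (Fin d) → ℂ) :
    Set (Lp ℂ 2 (volume : Measure (EuclideanSpace ℝ (Fin d)))) :=
  {f | ∃ A B : Set (EuclideanSpace ℝ (Fin d)),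
    IsCompact A ∧ MeasurableSet A ∧ Bornology.IsBounded B ∧ MeasurableSet B ∧
    (f : EuclideanSpace ℝ (Fin d) → ℂ) =ᵐ[volume]
      fun x => Set.indicator B (fun _ => (1 : ℂ)) x * ∫ y in A, K (x, y) * ψ y}

/-- The free-particle propagator `K(x,y) = c · exp(i a ‖x - y‖²)` (with `a ≠ 0`,
`c ≠ 0`) is continuous and nowhere zero, and for every initial state
`ψ ∈ L²(ℝ^d)` that is not almost everywhere zero, the `ℂ`-span of the vectors
`χ_B · ψ_A` (`A` compact measurable, `B` bounded measurable) is dense in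
`L²(ℝ^d)`. -/
theorem stmt_15 (d : ℕ) (hd : 1 ≤ d) (a : ℝ) (ha : a ≠ 0) (c : ℂ) (hc : c ≠ 0)
    (K : EuclideanSpace ℝ (Fin d) × EuclideanSpace ℝ (Fin d) → ℂ)
    (hK : K = fun p => c * Complex.exp (Complex.I * (a : ℂ) * ((‖p.1 - p.2‖ : ℂ)) ^ 2)) :
    Continuous K ∧ (∀ p, K p ≠ 0) ∧
    ∀ ψ : EuclideanSpace ℝ (Fin d) → ℂ, MemLp ψ 2 volume →
      ¬ (ψ =ᵐ[(volume : Measure (EuclideanSpace ℝ (Fin d)))] 0) →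
      Dense (Submodule.span ℂ (restrictedEvolutionSet d K ψ) :
        Set (Lp ℂ 2 (volume : Measure (EuclideanSpace ℝ (Fin d))))) := by
  have contK : Continuous K := by
    subst hK
    exact continuous_const.mul (Complex.continuous_exp.comp <|
      continuous_const.mul
        ((Complex.continuous_ofReal.comp ((continuous_fst.sub continuous_snd).norm)).pow 2))
  have hKne : ∀ p, K p ≠ 0 := by
    subst hK
    exact fun p => mul_ne_zero hc (Complex.exp_ne_zero _)
  have hKnorm : ∀ p, ‖K p‖ = ‖c‖ := by
    subst hK
    intro p
    have h1 : Complex.I * (a : ℂ) * ((‖p.1 - p.2‖ : ℂ)) ^ 2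
        = Complex.I * ((a * ‖p.1 - p.2‖ ^ 2 : ℝ) : ℂ) := by push_cast; ring
    simp only [norm_mul, h1, Complex.norm_exp]
    rw [show (Complex.I * ((a * ‖p.1 - p.2‖ ^ 2 : ℝ) : ℂ)).re = 0 by simp [Complex.mul_re, pow_two, Complex.mul_im]]
    simp
  refine ⟨contK, hKne, ?_⟩
  intro ψ hψ hψ0
  have hψm := hψ.aestronglyMeasurable
  have hfin : ∀ {s : Set (EuclideanSpace ℝ (Fin d))}, volume s < ⊤ → IntegrableOn ψ s volume := by
    intro s hs
    haveI : IsFiniteMeasure (volume.restrict s) :=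
      ⟨by rwa [Measure.restrict_apply_univ]⟩
    exact (hψ.restrict s).integrable (by norm_num)
  set ψA : Set (EuclideanSpace ℝ (Fin d)) → EuclideanSpace ℝ (Fin d) → ℂ :=
    fun A x => ∫ y in A, K (x, y) * ψ y with hψAdef
  have hcont : ∀ A : Set (EuclideanSpace ℝ (Fin d)), IntegrableOn ψ A volume →
      Continuous (ψA A) := by
    intro A hA
    apply continuous_of_dominated (bound := fun y => ‖c‖ * ‖ψ y‖)
    · intro x
      exact ((contK.comp (Continuous.prodMk_right x)).aestronglyMeasurable).mul hψm.restrict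
    · intro x
      exact Eventually.of_forall fun y => le_of_eq (by rw [norm_mul, hKnorm])
    · exact hA.norm.const_mul ‖c‖
    · exact Eventually.of_forall fun y =>
        (contK.comp (continuous_id.prodMk continuous_const)).mul continuous_const
  have hb : ∀ (A : Set (EuclideanSpace ℝ (Fin d))) (x : EuclideanSpace ℝ (Fin d)),
      IntegrableOn ψ A volume → ‖ψA A x‖ ≤ ‖c‖ * ∫ y in A, ‖ψ y‖ := by
    intro A x hA
    calc ‖ψA A x‖ ≤ ∫ y in A, ‖K (x, y) * ψ y‖ := norm_integral_le_integral_norm _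
    _ = ∫ y in A, ‖c‖ * ‖ψ y‖ := by
        apply integral_congr_ae
        refine Eventually.of_forall fun y => ?_
        show ‖K (x, y) * ψ y‖ = ‖c‖ * ‖ψ y‖
        rw [norm_mul, hKnorm]
    _ = ‖c‖ * ∫ y in A, ‖ψ y‖ := integral_const_mul _ _
  have hmemχ : ∀ (A B : Set (EuclideanSpace ℝ (Fin d))), IsCompact A →
      Bornology.IsBounded B → MeasurableSet B →
      MemLp (fun x => B.indicator (fun _ => (1:ℂ)) x * ψA A x) 2 volume := by
    intro A B hAc hBb hBm
    have hA : IntegrableOn ψ A volume := hfin hAc.measure_lt_top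
    have hfun : (fun x => B.indicator (fun _ => (1:ℂ)) x * ψA A x) = B.indicator (ψA A) := by
      funext x
      by_cases hx : x ∈ B <;> simp [hx]
    rw [hfun, memLp_indicator_iff_restrict hBm]
    haveI : IsFiniteMeasure (volume.restrict B) :=
      ⟨by rw [Measure.restrict_apply_univ]; exact hBb.measure_lt_top⟩
    exact MemLp.of_bound (hcont A hA).aestronglyMeasurable.restrict _
      (Eventually.of_forall fun x => hb A x hA)
  rw [Submodule.dense_iff_topologicalClosure_eq_top, Submodule.topologicalClosure_eq_top_iff,
    Submodule.eq_bot_iff]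
  intro g hg
  have hgm : MemLp (⇑g) 2 volume := Lp.memLp g
  have hgfin : ∀ {s : Set (EuclideanSpace ℝ (Fin d))}, volume s < ⊤ →
      IntegrableOn (⇑g) s volume := by
    intro s hs
    haveI : IsFiniteMeasure (volume.restrict s) :=
      ⟨by rwa [Measure.restrict_apply_univ]⟩
    exact (hgm.restrict s).integrable (by norm_num)
  have horth : ∀ (A B : Set (EuclideanSpace ℝ (Fin d))), IsCompact A → MeasurableSet A →
      Bornology.IsBounded B → MeasurableSet B →
      ∫ x in B, conj (ψA A x) * g x = 0 := by
    intro A B hAc hAm hBb hBm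
    have hmem := hmemχ A B hAc hBb hBm
    have hLp : hmem.toLp _ ∈ restrictedEvolutionSet d K ψ :=
      ⟨A, B, hAc, hAm, hBb, hBm, hmem.coeFn_toLp⟩
    have h0 : inner (𝕜 := ℂ) (hmem.toLp _) g = 0 :=
      (Submodule.mem_orthogonal _ g).1 hg _ (Submodule.subset_span hLp)
    rw [MeasureTheory.L2.inner_def] at h0
    have key : (∫ x, inner ℂ ((hmem.toLp _ : Lp ℂ 2 volume) x) (g x) : ℂ)
        = ∫ x in B, conj (ψA A x) * g x := by
      calc ∫ x, inner ℂ ((hmem.toLp _ : Lp ℂ 2 volume) x) (g x)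
          = ∫ x, conj (B.indicator (fun _ => (1:ℂ)) x * ψA A x) * g x := by
            apply integral_congr_ae
            filter_upwards [hmem.coeFn_toLp] with x hx
            rw [RCLike.inner_apply, hx, mul_comm]
        _ = ∫ x, B.indicator (fun x => conj (ψA A x) * g x) x := by
            apply integral_congr_ae
            refine Eventually.of_forall fun x => ?_
            by_cases hx : x ∈ B <;> simp [hx]
        _ = ∫ x in B, conj (ψA A x) * g x := integral_indicator hBm
    rw [← key]
    exact h0
  have hFzero : ∀ A : Set (EuclideanSpace ℝ (Fin d)), IsCompact A → MeasurableSet A →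
      (fun x => conj (ψA A x) * g x) =ᵐ[volume] 0 := by
    intro A hAc hAm
    have hA : IntegrableOn ψ A volume := hfin hAc.measure_lt_top
    have hloc : LocallyIntegrable (fun x => conj (ψA A x) * g x) volume := by
      rw [locallyIntegrable_iff]
      intro k hk
      refine Integrable.bdd_mul (c := ‖c‖ * ∫ y in A, ‖ψ y‖) (hgfin hk.measure_lt_top) ?_ ?_
      · exact ((Complex.continuous_conj.comp (hcont A hA)).aestronglyMeasurable).restrict
      · exact Eventually.of_forall fun x => by
          rw [RCLike.norm_conj]; exact hb A x hA
    refine aux hloc dense_univ ?_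
    intro z _ q hq
    exact horth A (closedBall z (q : ℝ)) hAc hAm isBounded_closedBall measurableSet_closedBall
  obtain ⟨D, hDc, hDd⟩ := TopologicalSpace.exists_countable_dense (EuclideanSpace ℝ (Fin d))
  haveI := hDc.to_subtype
  have hae : ∀ᵐ x ∂(volume : Measure (EuclideanSpace ℝ (Fin d))), ∀ (z : D) (q : ℚ), 0 < q →
      conj (ψA (closedBall (z : EuclideanSpace ℝ (Fin d)) (q : ℝ)) x) * g x = 0 := by
    rw [ae_all_iff]
    intro z
    rw [ae_all_iff]
    intro q
    by_cases hq : 0 < q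
    · filter_upwards [hFzero (closedBall (z : EuclideanSpace ℝ (Fin d)) (q : ℝ))
        (isCompact_closedBall _ _) measurableSet_closedBall] with x hx _
      simpa using hx
    · exact Eventually.of_forall fun x h => absurd h hq
  have hg0 : (⇑g : EuclideanSpace ℝ (Fin d) → ℂ) =ᵐ[volume] 0 := by
    filter_upwards [hae] with x hx
    simp only [Pi.zero_apply]
    by_contra hgx
    have hψzero : (fun y => K (x, y) * ψ y) =ᵐ[volume] 0 := by
      have hloc2 : LocallyIntegrable (fun y => K (x, y) * ψ y) volume := by
        rw [locallyIntegrable_iff]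
        intro k hk
        exact Integrable.bdd_mul (hfin hk.measure_lt_top)
          ((contK.comp (Continuous.prodMk_right x)).aestronglyMeasurable).restrict
          (Eventually.of_forall fun y => le_of_eq (hKnorm _))
      refine aux hloc2 hDd ?_
      intro z hz q hq
      have h1 := hx ⟨z, hz⟩ q hq
      have h2 : ψA (closedBall z (q : ℝ)) x = 0 := by
        rcases mul_eq_zero.1 h1 with h | h
        · simpa using congrArg (starRingEnd ℂ) h
        · exact absurd h hgx
      simpa [hψAdef] using h2
    refine hψ0 ?_
    filter_upwards [hψzero] with y hy
    simp only [Pi.zero_apply] at hy ⊢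
    rcases mul_eq_zero.1 hy with h | h
    · exact absurd h (hKne (x, y))
    · exact h
  exact Lp.eq_zero_iff_ae_eq_zero.2 hg0
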